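/- Let $(p_1,\dots,p_n)$ be a probability vector. Then $\sum_{i=1}^n p_i^3 \le \sqrt{n}\left(\sum_{i=1}^n p_i^2\right)^2$. -/
import Mathlib

open Finset

theorem prob_vector_cube_sum_le
    (n : ℕ) (hn : 1 ≤ n)
    (p : Fin n → ℝ) (hp0 : ∀ i, 0 ≤ p i) (hp1 : ∑ i, p i = 1) :
    ∑ i, (p i) ^ 3 ≤ Real.sqrt n * (∑ i, (p i) ^ 2) ^ 2 := by
  set S2 := ∑ i, (p i) ^ 2 with hS2
  set S3 := ∑ i, (p i) ^ 3 with hS3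
  set S4 := ∑ i, (p i) ^ 4 with hS4
  have hS2nn : 0 ≤ S2 := Finset.sum_nonneg fun i _ => sq_nonneg _
  have hS3nn : 0 ≤ S3 := Finset.sum_nonneg fun i _ => pow_nonneg (hp0 i) 3
  have h4 : (1 : ℝ) ≤ n * S2 := by
    have h := sq_sum_le_card_mul_sum_sq (s := Finset.univ) (f := p)
    simpa [hp1] using h
  have hcs : S3 ^ 2 ≤ S2 * S4 := by
    have h := sum_mul_sq_le_sq_mul_sq Finset.univ p (fun i => (p i) ^ 2)
    have e : ∑ i, p i * (p i) ^ 2 = S3 := by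
      rw [hS3]; apply Finset.sum_congr rfl; intro i _; ring
    have e2 : ∑ i, ((p i) ^ 2) ^ 2 = S4 := by
      rw [hS4]; apply Finset.sum_congr rfl; intro i _; ring
    rw [e, e2] at h
    exact h
  have h3 : S4 ≤ S2 ^ 2 := by
    have e : S4 = ∑ i, ((p i) ^ 2) ^ 2 := by
      rw [hS4]; apply Finset.sum_congr rfl; intro i _; ring
    rw [e, hS2]
    exact sum_sq_le_sq_sum_of_nonneg (fun i _ => sq_nonneg _)
  have hR : 0 ≤ Real.sqrt n * S2 ^ 2 := by positivity
  have key : S3 ^ 2 ≤ (Real.sqrt n * S2 ^ 2) ^ 2 := by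
    have h5 : S2 * S4 ≤ S2 * S2 ^ 2 := mul_le_mul_of_nonneg_left h3 hS2nn
    have h6 : S2 ^ 3 ≤ (n * S2) * S2 ^ 3 := by
      nlinarith [pow_nonneg hS2nn 3]
    have h7 : (Real.sqrt n * S2 ^ 2) ^ 2 = (n * S2) * S2 ^ 3 := by
      have : Real.sqrt n ^ 2 = (n : ℝ) := Real.sq_sqrt (by positivity)
      rw [mul_pow, this]; ring
    calc S3 ^ 2 ≤ S2 * S4 := hcs
      _ ≤ S2 * S2 ^ 2 := h5
      _ = S2 ^ 3 := by ring
      _ ≤ (n * S2) * S2 ^ 3 := h6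
      _ = (Real.sqrt n * S2 ^ 2) ^ 2 := h7.symm
  have := Real.sqrt_le_sqrt key
  rwa [Real.sqrt_sq hS3nn, Real.sqrt_sq hR] at this
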